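/- Let $C = \mathbb{R}_+ v_1 + \dots + \mathbb{R}_+ v_d \subset \mathbb{R}^d$ be a simplicial cone with extremal generators $v_1,\dots,v_d \in \mathbb{Z}^d$, let $F$ be a facet of $C$ and let $v$ be the extremal generator opposite to $F$. Let $\operatorname{ht}_F : \mathbb{R}^d \to \mathbb{R}$ be the facet-height function of $F$ and set $m = \operatorname{ht}_F(v)$. Then for each $j = 0, 1, \dots, m-1$, the semi-open parallelotope $\mathsf{par}(v_1,\dots,v_d)$ contains exactly $\mu(F)$ lattice points $x$ with $\operatorname{ht}_F(x) = j$, where $\mu(F)$ denotes the multiplicity of the facet $F$ (so that $\mu(C) = m \cdot \mu(F)$). -/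

import Mathlib

open Set

/-- Stratification of the lattice points of the basic parallelotope of a simplicial cone
by heights over a facet: for each `j = 0, …, m-1` there are exactly `μ(F)` lattice points
of height `j`, where `μ(C) = m · μ(F)`. -/
theorem stmt_2 (d : ℕ) (v : Fin d → (Fin d → ℤ))
    (hv : LinearIndependent ℝ (fun i => fun j => ((v i j : ℝ))))
    (i0 : Fin d) (L : (Fin d → ℝ) →ₗ[ℝ] ℝ)
    -- `L` is the facet-height function of the facet `F` spanned by the `v i`, `i ≠ i0`:
    (hL0 : ∀ i, i ≠ i0 → L (fun j => ((v i j : ℝ))) = 0)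
    (hLint : ∀ x : Fin d → ℤ, ∃ n : ℤ, L (fun j => ((x j : ℝ))) = n)
    (hLsurj : ∀ n : ℤ, ∃ x : Fin d → ℤ, L (fun j => ((x j : ℝ))) = n)
    (hLpos : 0 < L (fun j => ((v i0 j : ℝ))))
    (m : ℕ) (hm : (m : ℝ) = L (fun j => ((v i0 j : ℝ))))
    -- `μF` is the multiplicity of the facet `F`, so that `μ(C) = m * μF`:
    (μF : ℕ)
    (hμ : (Submodule.span ℤ (Set.range v)).toAddSubgroup.index = m * μF) :
    ∀ j : ℕ, j < m →
      Nat.card {x : Fin d → ℤ //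
        (∃ a : Fin d → ℝ, (∀ i, 0 ≤ a i ∧ a i < 1) ∧
          (fun k => ((x k : ℝ))) = ∑ i, a i • (fun k => ((v i k : ℝ)))) ∧
        L (fun k => ((x k : ℝ))) = (j : ℝ)} = μF := by
  intro j hj
  have hd : Nonempty (Fin d) := ⟨i0⟩
  have hm0 : m ≠ 0 := by omega
  -- real cast of lattice vectors
  set cz : (Fin d → ℤ) → (Fin d → ℝ) := fun x k => (x k : ℝ) with hcz
  set vR : Fin d → (Fin d → ℝ) := fun i k => ((v i k : ℝ)) with hvR
  have hczsum : ∀ (n : Fin d → ℤ), cz (∑ i, n i • v i) = ∑ i, (n i : ℝ) • vR i := by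
    intro n; funext k
    simp only [cz, vR, Finset.sum_apply, Pi.smul_apply, smul_eq_mul]
    push_cast
    rfl
  have hczsub : ∀ x y, cz (x - y) = cz x - cz y := by
    intro x y; funext k; simp [cz]
  -- the basis
  have hcard : Fintype.card (Fin d) = Module.finrank ℝ (Fin d → ℝ) := by
    simp
  let B : Module.Basis (Fin d) ℝ (Fin d → ℝ) := basisOfLinearIndependentOfCardEqFinrank hv hcard
  have hB : ⇑B = vR := coe_basisOfLinearIndependentOfCardEqFinrank hv hcard
  -- representation of sums
  have hreprsum : ∀ (c : Fin d → ℝ) (i : Fin d), B.repr (∑ i', c i' • vR i') i = c i := by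
    intro c i
    rw [← hB, B.repr_sum_self]
  -- L in terms of the basis representation
  have hLrepr : ∀ y : Fin d → ℝ, L y = B.repr y i0 * (m : ℝ) := by
    intro y
    conv_lhs => rw [← B.sum_repr y]
    rw [map_sum]
    rw [Finset.sum_eq_single i0]
    · rw [hB]
      simp only [map_smul, smul_eq_mul]
      rw [← hm]
    · intro i _ hi
      rw [hB]
      simp only [map_smul, smul_eq_mul]
      rw [hL0 i hi, mul_zero]
    · intro h; exact absurd (Finset.mem_univ i0) h
  -- the integer value of L on lattice points
  choose nz hnz using hLint
  have hnzc : ∀ x : Fin d → ℤ, (nz x : ℝ) = L (cz x) := fun x => (hnz x).symm ▸ rfl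
  have hnzadd : ∀ x y, nz (x + y) = nz x + nz y := by
    intro x y
    have : ((nz (x + y) : ℝ)) = ((nz x + nz y : ℤ) : ℝ) := by
      push_cast
      rw [hnzc, hnzc, hnzc]
      have : cz (x + y) = cz x + cz y := by funext k; simp [cz]
      rw [this, map_add]
    exact_mod_cast this
  -- the homomorphism to ZMod m
  let ψ : (Fin d → ℤ) →+ ZMod m := AddMonoidHom.mk' (fun x => ((nz x : ZMod m)))
    (by intro x y; simp only [hnzadd]; push_cast; ring)
  set S : AddSubgroup (Fin d → ℤ) := (Submodule.span ℤ (Set.range v)).toAddSubgroup with hS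
  have hSmem : ∀ x : Fin d → ℤ, x ∈ S ↔ ∃ n : Fin d → ℤ, ∑ i, n i • v i = x := by
    intro x
    rw [hS]
    exact Submodule.mem_span_range_iff_exists_fun ℤ
  -- S is contained in the kernel of ψ
  have hSker : ∀ s ∈ S, ψ s = 0 := by
    intro s hs
    obtain ⟨n, hn⟩ := (hSmem s).mp hs
    have h1 : (nz s : ℝ) = ((n i0 * m : ℤ) : ℝ) := by
      rw [hnzc, ← hn, hczsum, map_sum]
      push_cast
      rw [Finset.sum_eq_single i0]
      · simp only [map_smul, smul_eq_mul]
        rw [← hm]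
      · intro i _ hi
        simp only [map_smul, smul_eq_mul]
        rw [hL0 i hi, mul_zero]
      · intro h; exact absurd (Finset.mem_univ i0) h
    have h2 : nz s = n i0 * m := by exact_mod_cast h1
    show ((nz s : ZMod m)) = 0
    rw [h2]
    push_cast
    simp
  let φ : ((Fin d → ℤ) ⧸ S) →+ ZMod m := QuotientAddGroup.lift S ψ hSker
  have hφmk : ∀ x : Fin d → ℤ, φ ((x : (Fin d → ℤ) ⧸ S)) = ((nz x : ZMod m)) := by
    intro x; rfl
  -- φ is surjective
  have hφsurj : Function.Surjective φ := by
    intro k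
    obtain ⟨z, rfl⟩ := ZMod.intCast_surjective k
    obtain ⟨x, hx⟩ := hLsurj z
    refine ⟨(x : (Fin d → ℤ) ⧸ S), ?_⟩
    rw [hφmk]
    have : nz x = z := by
      have := hnzc x
      rw [show L (cz x) = (z : ℝ) from hx] at this
      exact_mod_cast this
    rw [this]
  -- cardinality of the kernel of φ
  have hQcard : Nat.card ((Fin d → ℤ) ⧸ S) = m * μF := hμ
  have hkerindex : (φ.ker).index = m := by
    rw [AddSubgroup.index, Nat.card_congr
      (QuotientAddGroup.quotientKerEquivOfSurjective φ hφsurj).toEquiv, Nat.card_zmod]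
  have hkercard : Nat.card φ.ker = μF := by
    have h3 : Nat.card φ.ker * (φ.ker).index = m * μF :=
      (AddSubgroup.card_mul_index φ.ker).trans hQcard
    rw [hkerindex] at h3
    have := Nat.eq_of_mul_eq_mul_left (Nat.pos_of_ne_zero hm0) (by linarith [h3] : m * Nat.card φ.ker = m * μF)
    omega
  -- the fiber of φ over (j : ZMod m) has cardinality μF
  have hfiber : Nat.card {q : (Fin d → ℤ) ⧸ S // φ q = ((j : ℤ) : ZMod m)} = μF := by
    obtain ⟨q0, hq0⟩ := hφsurj ((j : ℤ) : ZMod m)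
    have e : {q : (Fin d → ℤ) ⧸ S // φ q = ((j : ℤ) : ZMod m)} ≃ φ.ker :=
      { toFun := fun q => ⟨q.1 - q0, by
          rw [AddMonoidHom.mem_ker, map_sub, q.2, hq0, sub_self]⟩
        invFun := fun k => ⟨k.1 + q0, by
          rw [map_add, AddMonoidHom.mem_ker.mp k.2, hq0, zero_add]⟩
        left_inv := fun q => by simp
        right_inv := fun k => by simp }
    rw [Nat.card_congr e, hkercard]
  -- uniqueness of parallelotope representatives
  have huniq : ∀ x y : Fin d → ℤ,
      (∀ i, 0 ≤ B.repr (cz x) i ∧ B.repr (cz x) i < 1) →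
      (∀ i, 0 ≤ B.repr (cz y) i ∧ B.repr (cz y) i < 1) →
      x - y ∈ S → x = y := by
    intro x y hx hy hxy
    obtain ⟨n, hn⟩ := (hSmem _).mp hxy
    have hrepr : ∀ i, (n i : ℝ) = B.repr (cz x) i - B.repr (cz y) i := by
      intro i
      have : cz (x - y) = ∑ i', (n i' : ℝ) • vR i' := by rw [← hn, hczsum]
      have h2 : B.repr (cz (x - y)) i = (n i : ℝ) := by rw [this, hreprsum]
      rw [← h2, hczsub, map_sub]
      rfl
    have hn0 : ∀ i, n i = 0 := by
      intro i
      have h1 := (hx i).1; have h2 := (hx i).2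
      have h3 := (hy i).1; have h4 := (hy i).2
      have h5 : (-1 : ℝ) < (n i : ℝ) := by rw [hrepr i]; linarith
      have h6 : ((n i : ℝ)) < 1 := by rw [hrepr i]; linarith
      have h5' : (-1 : ℤ) < n i := by exact_mod_cast h5
      have h6' : n i < 1 := by exact_mod_cast h6
      omega
    have : x - y = 0 := by
      rw [← hn]
      simp [hn0]
    exact sub_eq_zero.mp this
  -- existence of parallelotope representatives
  have hred : ∀ y : Fin d → ℤ, ∃ x : Fin d → ℤ,
      (∀ i, 0 ≤ B.repr (cz x) i ∧ B.repr (cz x) i < 1) ∧ y - x ∈ S := by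
    intro y
    refine ⟨y - ∑ i, ⌊B.repr (cz y) i⌋ • v i, ?_, ?_⟩
    · intro i
      have hrw : cz (y - ∑ i', ⌊B.repr (cz y) i'⌋ • v i')
          = cz y - ∑ i', ((⌊B.repr (cz y) i'⌋ : ℝ)) • vR i' := by
        rw [hczsub, hczsum]
      have : B.repr (cz (y - ∑ i', ⌊B.repr (cz y) i'⌋ • v i')) i
          = B.repr (cz y) i - (⌊B.repr (cz y) i⌋ : ℝ) := by
        rw [hrw, map_sub]
        have := hreprsum (fun i' => ((⌊B.repr (cz y) i'⌋ : ℝ))) i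
        rw [Finsupp.coe_sub, Pi.sub_apply, this]
      rw [this]
      constructor
      · have := Int.floor_le (B.repr (cz y) i); linarith
      · have := Int.lt_floor_add_one (B.repr (cz y) i); linarith
    · have : y - (y - ∑ i, ⌊B.repr (cz y) i⌋ • v i) = ∑ i, ⌊B.repr (cz y) i⌋ • v i := by
        ring
      rw [this]
      exact (hSmem _).mpr ⟨_, rfl⟩
  -- characterization of parallelotope membership
  have hparF : ∀ (x : Fin d → ℤ) (a : Fin d → ℝ), (∀ i, 0 ≤ a i ∧ a i < 1) →
      cz x = ∑ i, a i • vR i → ∀ i, 0 ≤ B.repr (cz x) i ∧ B.repr (cz x) i < 1 := by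
    intro x a ha heq i
    rw [heq, hreprsum]
    exact ha i
  have hparB : ∀ (x : Fin d → ℤ), (∀ i, 0 ≤ B.repr (cz x) i ∧ B.repr (cz x) i < 1) →
      ∃ a : Fin d → ℝ, (∀ i, 0 ≤ a i ∧ a i < 1) ∧ cz x = ∑ i, a i • vR i := by
    intro x hx
    refine ⟨fun i => B.repr (cz x) i, hx, ?_⟩
    conv_lhs => rw [← B.sum_repr (cz x)]
    rw [hB]
  -- bounds on the height of parallelotope points
  have hbound : ∀ x : Fin d → ℤ, (∀ i, 0 ≤ B.repr (cz x) i ∧ B.repr (cz x) i < 1) →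
      0 ≤ nz x ∧ nz x < (m : ℤ) := by
    intro x hx
    have h1 : (nz x : ℝ) = B.repr (cz x) i0 * (m : ℝ) := by rw [hnzc, hLrepr]
    have hmpos : (0 : ℝ) < (m : ℝ) := by exact_mod_cast Nat.pos_of_ne_zero hm0
    have h2 : (0 : ℝ) ≤ (nz x : ℝ) := by
      rw [h1]; exact mul_nonneg (hx i0).1 hmpos.le
    have h3 : (nz x : ℝ) < (m : ℝ) := by
      rw [h1]
      calc B.repr (cz x) i0 * (m : ℝ) < 1 * (m : ℝ) := by
            exact mul_lt_mul_of_pos_right (hx i0).2 hmpos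
        _ = (m : ℝ) := one_mul _
    exact ⟨by exact_mod_cast h2, by exact_mod_cast h3⟩
  -- the bijection between the stratum and the fiber
  rw [← hfiber]
  apply Nat.card_congr
  refine Equiv.ofBijective (fun x =>
    ⟨((x.1 : Fin d → ℤ) : (Fin d → ℤ) ⧸ S), ?_⟩) ⟨?_, ?_⟩
  · obtain ⟨⟨a, ha, heq⟩, hLx⟩ := x.2
    rw [hφmk]
    have : nz x.1 = (j : ℤ) := by
      have h1 := hnzc x.1
      rw [show L (cz x.1) = ((j : ℤ) : ℝ) by exact_mod_cast hLx] at h1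
      exact_mod_cast h1
    rw [this]
  · intro x y h
    have h' : ((x.1 : Fin d → ℤ) : (Fin d → ℤ) ⧸ S) = ((y.1 : Fin d → ℤ) : (Fin d → ℤ) ⧸ S) :=
      congrArg Subtype.val h
    have hmem : x.1 - y.1 ∈ S := by
      have := QuotientAddGroup.eq.mp h'
      rwa [neg_add_eq_sub, ← AddSubgroup.neg_mem_iff, neg_sub] at this
    obtain ⟨⟨a, ha, heqa⟩, _⟩ := x.2
    obtain ⟨⟨b, hb, heqb⟩, _⟩ := y.2
    exact Subtype.ext (huniq x.1 y.1 (hparF x.1 a ha heqa) (hparF y.1 b hb heqb) hmem)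
  · rintro ⟨q, hq⟩
    obtain ⟨y, rfl⟩ := QuotientAddGroup.mk_surjective q
    obtain ⟨x, hxpar, hyx⟩ := hred y
    have hclass : ((x : (Fin d → ℤ) ⧸ S)) = ((y : (Fin d → ℤ) ⧸ S)) := by
      rw [QuotientAddGroup.eq, neg_add_eq_sub]
      exact hyx
    have hφx : ((nz x : ZMod m)) = ((j : ℤ) : ZMod m) := by
      rw [← hφmk, hclass]
      exact hq
    have hnzj : nz x = (j : ℤ) := by
      have hmod := (ZMod.intCast_eq_intCast_iff _ _ _).mp hφx
      have h1 := hbound x hxpar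
      have h2 : nz x % (m : ℤ) = nz x := Int.emod_eq_of_lt h1.1 h1.2
      have h3 : (j : ℤ) % (m : ℤ) = (j : ℤ) :=
        Int.emod_eq_of_lt (by positivity) (by exact_mod_cast hj)
      have h4 : nz x % (m : ℤ) = (j : ℤ) % (m : ℤ) := hmod
      omega
    refine ⟨⟨x, ?_, ?_⟩, ?_⟩
    · exact hparB x hxpar
    · show L (cz x) = ((j : ℕ) : ℝ)
      rw [← hnzc, hnzj]
      push_cast
      rfl
    · exact Subtype.ext hclass
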